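/- Let G be a finite simple graph and let W be an odd-parity cover of the odd-extension G̅ of G. Then setting V₁ = W ∩ V(G) and V₂ = V(G) \ V₁, both induced subgraphs G[V₁] and G[V₂] have all degrees even. -/

import Mathlib

/-- The odd-extension of a graph `G`: to each vertex of even degree we attach a new
pendant vertex adjacent only to it. -/
def oddExtension {V : Type*} [Fintype V] [DecidableEq V]
    (G : SimpleGraph V) [DecidableRel G.Adj] :
    SimpleGraph (V ⊕ {v : V // Even (G.degree v)}) where
  Adj x y :=
    match x, y with
    | Sum.inl u, Sum.inl w => G.Adj u w
    | Sum.inl u, Sum.inr v => u = v.1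
    | Sum.inr v, Sum.inl u => v.1 = u
    | Sum.inr _, Sum.inr _ => False
  symm := by
    constructor
    rintro (u | v) (w | v') h
    · exact G.adj_symm h
    · exact h.symm
    · exact h.symm
    · exact h
  loopless := by
    constructor
    rintro (u | v) h
    · exact G.irrefl h
    · exact h

/-- if `W` is an odd-parity cover of the odd-extension of `G`, then
`V₁ = W ∩ V(G)` and its complement both induce subgraphs of `G` with all degrees even. -/
theorem stmt_4 {V : Type*} [Fintype V] [DecidableEq V]
    (G : SimpleGraph V) [DecidableRel G.Adj]
    (W : Set (V ⊕ {v : V // Even (G.degree v)}))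
    (hW : ∀ x, Odd ((((oddExtension G).neighborSet x ∪ {x}) ∩ W).ncard)) :
    (∀ v : V, Sum.inl v ∈ W →
      Even (({u : V | Sum.inl u ∈ W} ∩ G.neighborSet v).ncard)) ∧
    (∀ v : V, Sum.inl v ∉ W →
      Even (({u : V | Sum.inl u ∉ W} ∩ G.neighborSet v).ncard)) := by
  classical
  set A : Set V := {u : V | Sum.inl u ∈ W} with hA
  -- pendant vertices: exactly one of inl w.1, inr w is in W
  have pend : ∀ (w : {v : V // Even (G.degree v)}), (Sum.inl w.1 ∈ W ↔ Sum.inr w ∉ W) := by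
    intro w
    have h := hW (Sum.inr w)
    have hset : (oddExtension G).neighborSet (Sum.inr w) ∪ {Sum.inr w}
        = {Sum.inl w.1, Sum.inr w} := by
      ext x
      rcases x with u | u
      · simp [SimpleGraph.neighborSet, oddExtension, eq_comm]
      · simp [SimpleGraph.neighborSet, oddExtension]
    rw [hset] at h
    by_cases h1 : Sum.inl w.1 ∈ W <;> by_cases h2 : (Sum.inr w : V ⊕ _) ∈ W
    · exfalso
      have he : ({Sum.inl w.1, Sum.inr w} : Set (V ⊕ _)) ∩ W = {Sum.inl w.1, Sum.inr w} := by
        rw [Set.inter_eq_left]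
        rintro x (rfl | rfl) <;> assumption
      rw [he, Set.ncard_pair (by simp)] at h
      simp [Nat.odd_iff] at h
    · tauto
    · tauto
    · exfalso
      have he : ({Sum.inl w.1, Sum.inr w} : Set (V ⊕ _)) ∩ W = ∅ := by
        rw [Set.eq_empty_iff_forall_notMem]
        rintro x ⟨(rfl | rfl), hx⟩ <;> [exact h1 hx; exact h2 hx]
      rw [he] at h
      simp at h
  -- main count at a vertex inl v
  have key : ∀ v : V, Odd ((A ∩ G.neighborSet v).ncard + (if Sum.inl v ∈ W then 1 else 0)
      + (if h : Even (G.degree v) then (if Sum.inr ⟨v, h⟩ ∈ W then 1 else 0) else 0)) := by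
    intro v
    have h := hW (Sum.inl v)
    have hset : ((oddExtension G).neighborSet (Sum.inl v) ∪ {Sum.inl v}) ∩ W
        = Sum.inl '' ((A ∩ G.neighborSet v) ∪ ({v} ∩ A))
          ∪ Sum.inr '' ({w : {v : V // Even (G.degree v)} | w.1 = v} ∩ (Sum.inr ⁻¹' W)) := by
      ext x
      rcases x with u | u
      · simp [SimpleGraph.neighborSet, oddExtension, hA, G.adj_comm]
        tauto
      · simp [SimpleGraph.neighborSet, oddExtension, eq_comm]
    rw [hset] at h
    have d1 : Disjoint (Sum.inl '' ((A ∩ G.neighborSet v) ∪ ({v} ∩ A)))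
        (Sum.inr '' ({w : {v : V // Even (G.degree v)} | w.1 = v} ∩ (Sum.inr ⁻¹' W))) := by
      simp [Set.disjoint_left]
    have d2 : Disjoint (A ∩ G.neighborSet v) ({v} ∩ A) :=
      Set.disjoint_left.mpr (by rintro x ⟨-, hx⟩ ⟨rfl, -⟩; exact G.irrefl hx)
    rw [Set.ncard_union_eq d1 (Set.toFinite _) (Set.toFinite _),
      Set.ncard_image_of_injective _ Sum.inl_injective,
      Set.ncard_image_of_injective _ Sum.inr_injective,
      Set.ncard_union_eq d2 (Set.toFinite _) (Set.toFinite _)] at h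
    have h1 : ({v} ∩ A).ncard = if Sum.inl v ∈ W then 1 else 0 := by
      by_cases hv : Sum.inl v ∈ W
      · rw [if_pos hv, Set.inter_eq_left.mpr (by simpa [hA] using hv), Set.ncard_singleton]
      · have : ({v} ∩ A : Set V) = ∅ :=
          Set.eq_empty_iff_forall_notMem.mpr (by rintro x ⟨rfl, hx⟩; exact hv hx)
        rw [if_neg hv, this, Set.ncard_empty]
    have h2 : ({w : {v : V // Even (G.degree v)} | w.1 = v} ∩ (Sum.inr ⁻¹' W)).ncard
        = if h : Even (G.degree v) then (if Sum.inr ⟨v, h⟩ ∈ W then 1 else 0) else 0 := by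
      by_cases he : Even (G.degree v)
      · rw [dif_pos he]
        have hs : {w : {v : V // Even (G.degree v)} | w.1 = v} = {⟨v, he⟩} := by
          ext w; simp [Subtype.ext_iff]
        rw [hs]
        by_cases hw : (Sum.inr ⟨v, he⟩ : V ⊕ _) ∈ W
        · rw [if_pos hw, Set.inter_eq_left.mpr (by simpa using hw), Set.ncard_singleton]
        · have : (({⟨v, he⟩} : Set {v : V // Even (G.degree v)}) ∩ (Sum.inr ⁻¹' W)) = ∅ :=
            Set.eq_empty_iff_forall_notMem.mpr (by rintro x ⟨rfl, hx⟩; exact hw hx)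
          rw [if_neg hw, this, Set.ncard_empty]
      · have : ({w : {v : V // Even (G.degree v)} | w.1 = v} ∩ (Sum.inr ⁻¹' W)) = ∅ :=
          Set.eq_empty_iff_forall_notMem.mpr (by rintro ⟨w, hw⟩ ⟨h', -⟩; exact he (h' ▸ hw))
        rw [dif_neg he, this, Set.ncard_empty]
    rw [h1, h2] at h
    exact h
  constructor
  · intro v hv
    have h := key v
    rw [if_pos hv] at h
    by_cases he : Even (G.degree v)
    · rw [dif_pos he, if_neg ((pend ⟨v, he⟩).mp hv)] at h
      rw [Nat.odd_iff] at h; rw [Nat.even_iff]; omega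
    · rw [dif_neg he] at h
      rw [Nat.odd_iff] at h; rw [Nat.even_iff]; omega
  · intro v hv
    have h := key v
    rw [if_neg hv] at h
    have hsplit : ({u : V | Sum.inl u ∉ W} ∩ G.neighborSet v).ncard
        + (A ∩ G.neighborSet v).ncard = G.degree v := by
      rw [← Set.ncard_union_eq (by
          simp [Set.disjoint_left, hA]
          tauto) (Set.toFinite _) (Set.toFinite _)]
      have : ({u : V | Sum.inl u ∉ W} ∩ G.neighborSet v) ∪ (A ∩ G.neighborSet v)
          = G.neighborSet v := by
        ext u; simp [hA]; tauto
      rw [this, Set.ncard_eq_toFinset_card', ← SimpleGraph.neighborFinset_def,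
        SimpleGraph.card_neighborFinset_eq_degree]
    by_cases he : Even (G.degree v)
    · rw [dif_pos he] at h
      have hw : (Sum.inr ⟨v, he⟩ : V ⊕ _) ∈ W := by
        by_contra hc
        exact hv ((pend ⟨v, he⟩).mpr hc)
      rw [if_pos hw] at h
      rw [Nat.even_iff] at he ⊢
      rw [Nat.odd_iff] at h
      omega
    · rw [dif_neg he] at h
      rw [Nat.even_iff]
      rw [Nat.odd_iff] at h
      have := Nat.odd_iff.mp (Nat.not_even_iff_odd.mp he)
      omega
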